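/- arXiv:0911.0920 — 2 statements merged into one kernel-verified Lean document; each statement's English description precedes it below -/
import Mathlib

section
/- Let g be a unitary transformation of V and vol_g^⊥ a nonzero element of the top exterior power Λ^{codim V^g}(((V^g)^⊥)^*) ⊂ Λ V^*. Then for every dv ∈ Λ V^*, one has dv ∧ vol_g^⊥ = (g·dv) ∧ vol_g^⊥. -/
open Module Submodule

set_option synthInstance.maxHeartbeats 1000000
set_option maxHeartbeats 1000000

/-- `ω` is a nonzero element of the image in `Λ V^*` of the top exterior power of the
subspace `W` of `V^*`: it is a product of the members of some basis of `W`.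
(Applied to `W = (V^g).dualAnnihilator`, the canonical copy of `((V^g)ᗮ)^*` inside
`V^*`, this says `ω` is a choice of `vol_g^⊥`.) -/
def IsVolForm {V : Type*} [NormedAddCommGroup V] [InnerProductSpace ℂ V]
    (W : Submodule ℂ (Module.Dual ℂ V)) (ω : ExteriorAlgebra ℂ (Module.Dual ℂ V)) : Prop :=
  ∃ b : Basis (Fin (finrank ℂ W)) ℂ W,
    ω = (List.ofFn fun i => ExteriorAlgebra.ι ℂ ((b i : W) : Module.Dual ℂ V)).prod

/-- `ι w` anticommutes past anything, in the form involving the grade involution. -/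
lemma ι_mul_eq_involute_mul {R M : Type*} [CommRing R] [AddCommGroup M] [Module R M]
    (w : M) (x : ExteriorAlgebra R M) :
    ExteriorAlgebra.ι R w * x = CliffordAlgebra.involute x * ExteriorAlgebra.ι R w := by
  induction x using ExteriorAlgebra.induction with
  | algebraMap r => rw [AlgHom.commutes]; exact (Algebra.commutes r _).symm
  | ι m =>
      rw [CliffordAlgebra.involute_ι, neg_mul]
      exact eq_neg_of_add_eq_zero_right (ExteriorAlgebra.ι_add_mul_swap (R := R) m w)
  | mul x y hx hy =>
      rw [map_mul, ← mul_assoc, hx, mul_assoc, hy, ← mul_assoc]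
  | add x y hx hy => rw [map_add, mul_add, hx, hy, add_mul]

/-- If `w` lies in the span `W` of the factors of a volume form `ω`, then `ι w * ω = 0`. -/
lemma ι_mul_volForm_eq_zero {V : Type*} [NormedAddCommGroup V] [InnerProductSpace ℂ V]
    {W : Submodule ℂ (Module.Dual ℂ V)} {ω : ExteriorAlgebra ℂ (Module.Dual ℂ V)}
    (hω : IsVolForm W ω) {w : Module.Dual ℂ V} (hw : w ∈ W) :
    ExteriorAlgebra.ι ℂ w * ω = 0 := by
  obtain ⟨b, rfl⟩ := hω
  have hrepr : w = ∑ i, b.repr ⟨w, hw⟩ i • ((b i : W) : Module.Dual ℂ V) := by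
    have := b.sum_repr ⟨w, hw⟩
    apply_fun (Submodule.subtype W) at this
    simp only [map_sum, map_smul, Submodule.subtype_apply] at this; exact this.symm
  rw [hrepr, map_sum, Finset.sum_mul]
  refine Finset.sum_eq_zero fun i _ => ?_
  rw [map_smul, smul_mul_assoc,
    ExteriorAlgebra.ι_mul_prod_list (fun i => ((b i : W) : Module.Dual ℂ V)) i, smul_zero]

/-- For a unitary `g` and any `dv ∈ Λ V^*`, one has `dv ∧ vol_g^⊥ = (g·dv) ∧ vol_g^⊥`,
where `g` acts on `V^*` by `(g·φ)(v) = φ(g⁻¹ v)` and on `Λ V^*` functorially. -/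
theorem wedge_volForm_eq_smul_wedge_volForm
    {V : Type*} [NormedAddCommGroup V] [InnerProductSpace ℂ V] [FiniteDimensional ℂ V]
    (g : V ≃ₗᵢ[ℂ] V) (ω : ExteriorAlgebra ℂ (Module.Dual ℂ V))
    (hω : IsVolForm ((LinearMap.ker
        (LinearMap.id - g.toLinearEquiv.toLinearMap)).dualAnnihilator) ω)
    (dv : ExteriorAlgebra ℂ (Module.Dual ℂ V)) :
    dv * ω
      = (ExteriorAlgebra.map (g.symm.toLinearEquiv.toLinearMap.dualMap)) dv * ω := by
  set A := g.symm.toLinearEquiv.toLinearMap.dualMap with hA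
  -- key: for every φ, A φ - φ annihilates the fixed space
  have hker : ∀ φ : Module.Dual ℂ V, A φ - φ ∈
      (LinearMap.ker (LinearMap.id - g.toLinearEquiv.toLinearMap)).dualAnnihilator := by
    intro φ
    rw [Submodule.mem_dualAnnihilator]
    intro v hv
    have hgv : g v = v := by
      have := hv
      rw [LinearMap.mem_ker] at this
      have h2 : v - g v = 0 := by simpa using this
      exact (sub_eq_zero.mp h2).symm
    have hgsv : g.symm v = v := by
      conv_lhs => rw [← hgv]
      exact g.symm_apply_apply v
    simp [hA, LinearMap.dualMap_apply, hgsv]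
  -- strengthened induction
  have key : ∀ x z : ExteriorAlgebra ℂ (Module.Dual ℂ V),
      x * (z * ω) = (ExteriorAlgebra.map A) x * (z * ω) := by
    intro x
    induction x using ExteriorAlgebra.induction with
    | algebraMap r => intro z; rw [AlgHom.commutes]
    | ι φ =>
        intro z
        rw [ExteriorAlgebra.map_apply_ι]
        have : ExteriorAlgebra.ι ℂ (A φ) =
            ExteriorAlgebra.ι ℂ φ + ExteriorAlgebra.ι ℂ (A φ - φ) := by
          rw [← map_add]; congr 1; abel
        rw [this, add_mul]
        have hz : ExteriorAlgebra.ι ℂ (A φ - φ) * (z * ω) = 0 := by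
          rw [← mul_assoc, ι_mul_eq_involute_mul, mul_assoc,
            ι_mul_volForm_eq_zero hω (hker φ), mul_zero]
        rw [hz, add_zero]
    | mul x y hx hy =>
        intro z
        calc x * y * (z * ω) = x * (y * z * ω) := by rw [mul_assoc, mul_assoc]
          _ = ExteriorAlgebra.map A x * (y * z * ω) := hx (y * z)
          _ = ExteriorAlgebra.map A x * (y * (z * ω)) := by rw [mul_assoc]
          _ = ExteriorAlgebra.map A x * (ExteriorAlgebra.map A y * (z * ω)) := by rw [hy z]
          _ = ExteriorAlgebra.map A (x * y) * (z * ω) := by rw [map_mul, mul_assoc]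
    | add x y hx hy => intro z; rw [map_add, add_mul, add_mul, hx, hy]
  have := key dv 1
  simpa using this
end

section
/- In the complex reflection group G(r,1,n) = (ℤ/rℤ) ≀ S_n acting on ℂ^n by monomial matrices whose nonzero entries are r-th roots of unity, reflection length coincides with the codimension of the fixed subspace: l(g) = codim (ℂ^n)^g for all g. -/
open Module Submodule

/-- `M` is a monomial matrix whose nonzero entries are `r`-th roots of unity, i.e. an
element of `G(r,1,n) = (ℤ/rℤ) ≀ Sₙ` in its natural representation on `ℂⁿ`. -/
def IsMonomialMat (r n : ℕ) (M : Matrix (Fin n) (Fin n) ℂ) : Prop :=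
  ∃ (σ : Equiv.Perm (Fin n)) (c : Fin n → ℂ), (∀ j, c j ^ r = 1) ∧
    ∀ i j, M i j = if i = σ j then c j else 0

/-- The fixed subspace `(ℂⁿ)^M` of a matrix `M`. -/
noncomputable def fixedMat {n : ℕ} (M : Matrix (Fin n) (Fin n) ℂ) : Submodule ℂ (Fin n → ℂ) :=
  LinearMap.ker (M.mulVecLin - LinearMap.id)

/-- `M` is a reflection in `G(r,1,n)`: a nonidentity element of `G(r,1,n)` fixing a
hyperplane pointwise. -/
def IsReflMat (r n : ℕ) (M : Matrix (Fin n) (Fin n) ℂ) : Prop :=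
  IsMonomialMat r n M ∧ M ≠ 1 ∧ finrank ℂ (fixedMat M) = n - 1

/-- The reflection length in `G(r,1,n)`: the minimal number of reflections of `G(r,1,n)`
whose product is `M`. -/
noncomputable def reflLengthMat (r n : ℕ) (M : Matrix (Fin n) (Fin n) ℂ) : ℕ :=
  sInf {k : ℕ | ∃ w : List (Matrix (Fin n) (Fin n) ℂ),
    w.length = k ∧ (∀ s ∈ w, IsReflMat r n s) ∧ w.prod = M}

/-- explicit monomial matrix -/
def monoMat {n : ℕ} (σ : Equiv.Perm (Fin n)) (c : Fin n → ℂ) : Matrix (Fin n) (Fin n) ℂ :=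
  Matrix.of fun i j => if i = σ j then c j else 0

lemma monoMat_apply {n : ℕ} (σ : Equiv.Perm (Fin n)) (c : Fin n → ℂ) (i j : Fin n) :
    monoMat σ c i j = if i = σ j then c j else 0 := rfl

lemma isMonomial_monoMat {r n : ℕ} {σ : Equiv.Perm (Fin n)} {c : Fin n → ℂ}
    (hc : ∀ j, c j ^ r = 1) : IsMonomialMat r n (monoMat σ c) :=
  ⟨σ, c, hc, fun _ _ => rfl⟩

lemma eq_monoMat {r n : ℕ} {M : Matrix (Fin n) (Fin n) ℂ} (h : IsMonomialMat r n M) :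
    ∃ σ c, (∀ j, c j ^ r = 1) ∧ M = monoMat σ c := by
  obtain ⟨σ, c, hc, hM⟩ := h
  exact ⟨σ, c, hc, by ext i j; rw [hM]; rfl⟩

lemma monoMat_mulVec {n : ℕ} (σ : Equiv.Perm (Fin n)) (c : Fin n → ℂ) (x : Fin n → ℂ)
    (i : Fin n) : (monoMat σ c).mulVec x i = c (σ.symm i) * x (σ.symm i) := by
  simp only [Matrix.mulVec, dotProduct, monoMat_apply]
  rw [Finset.sum_eq_single (σ.symm i)]
  · simp
  · intro b _ hb
    rw [if_neg, zero_mul]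
    intro h
    exact hb (by simp [h])
  · simp

lemma mem_fixedMat {n : ℕ} {M : Matrix (Fin n) (Fin n) ℂ} {x : Fin n → ℂ} :
    x ∈ fixedMat M ↔ M.mulVec x = x := by
  simp [fixedMat, LinearMap.mem_ker, sub_eq_zero, Matrix.mulVecLin_apply]

lemma mem_fixedMat_monoMat {n : ℕ} {σ : Equiv.Perm (Fin n)} {c : Fin n → ℂ} {x : Fin n → ℂ} :
    x ∈ fixedMat (monoMat σ c) ↔ ∀ j, c j * x j = x (σ j) := by
  rw [mem_fixedMat, funext_iff]
  constructor
  · intro h j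
    have := h (σ j)
    rwa [monoMat_mulVec, Equiv.symm_apply_apply] at this
  · intro h i
    rw [monoMat_mulVec]
    have := h (σ.symm i)
    rwa [Equiv.apply_symm_apply] at this

lemma monoMat_mul {n : ℕ} (σ τ : Equiv.Perm (Fin n)) (c d : Fin n → ℂ) :
    monoMat σ c * monoMat τ d = monoMat (σ * τ) (fun j => c (τ j) * d j) := by
  ext i j
  simp only [Matrix.mul_apply, monoMat_apply]
  rw [Finset.sum_eq_single (τ j)]
  · rw [if_pos rfl]
    simp only [Equiv.Perm.mul_apply]
    by_cases h : i = σ (τ j) <;> simp [h]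
  · intro b _ hb
    rw [if_neg hb, mul_zero]
  · simp

lemma monoMat_one {n : ℕ} : monoMat (1 : Equiv.Perm (Fin n)) (fun _ => (1:ℂ)) = 1 := by
  ext i j
  rw [monoMat_apply, Matrix.one_apply]
  by_cases h : i = j <;> simp [h]

lemma fixedMat_one {n : ℕ} : fixedMat (1 : Matrix (Fin n) (Fin n) ℂ) = ⊤ := by
  ext x
  simp [mem_fixedMat, Matrix.one_mulVec]

lemma finrank_fixedMat_le {n : ℕ} (M : Matrix (Fin n) (Fin n) ℂ) :
    finrank ℂ (fixedMat M) ≤ n := by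
  have := Submodule.finrank_le (fixedMat M)
  rwa [Module.finrank_fin_fun] at this

lemma eq_one_of_fixedMat_eq_top {n : ℕ} {M : Matrix (Fin n) (Fin n) ℂ}
    (h : fixedMat M = ⊤) : M = 1 := by
  ext i j
  have hx : M.mulVec (Pi.single j 1) = Pi.single j 1 :=
    mem_fixedMat.mp (h ▸ Submodule.mem_top)
  have := congrFun hx i
  rw [Matrix.mulVec_single] at this
  simpa [Matrix.one_apply, Pi.single_apply, eq_comm] using this

lemma finrank_ker_proj {n : ℕ} {f : (Fin n → ℂ) →ₗ[ℂ] ℂ} (hf : f ≠ 0) :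
    finrank ℂ (LinearMap.ker f) = n - 1 := by
  have h := LinearMap.finrank_range_add_finrank_ker f
  have hr : LinearMap.range f = ⊤ := by
    rcases IsSimpleOrder.eq_bot_or_eq_top (LinearMap.range f) with h' | h'
    · exact absurd (LinearMap.range_eq_bot.mp h') hf
    · exact h'
  rw [hr, finrank_top, Module.finrank_self, Module.finrank_fin_fun] at h
  omega

lemma fixedMat_inf_le {n : ℕ} (A B : Matrix (Fin n) (Fin n) ℂ) :
    fixedMat A ⊓ fixedMat B ≤ fixedMat (A * B) := by
  rintro x ⟨hA, hB⟩
  have hA' : A.mulVec x = x := mem_fixedMat.mp hA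
  have hB' : B.mulVec x = x := mem_fixedMat.mp hB
  rw [mem_fixedMat, ← Matrix.mulVec_mulVec, hB', hA']

lemma finrank_fixedMat_mul {n : ℕ} (A B : Matrix (Fin n) (Fin n) ℂ) :
    finrank ℂ (fixedMat A) + finrank ℂ (fixedMat B) ≤ finrank ℂ (fixedMat (A * B)) + n := by
  have h1 := Submodule.finrank_sup_add_finrank_inf_eq (fixedMat A) (fixedMat B)
  have h3 : finrank ℂ (fixedMat A ⊔ fixedMat B : Submodule ℂ (Fin n → ℂ)) ≤ n := by
    have := Submodule.finrank_le (fixedMat A ⊔ fixedMat B)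
    rwa [Module.finrank_fin_fun] at this
  have h4 : finrank ℂ (fixedMat A ⊓ fixedMat B : Submodule ℂ (Fin n → ℂ)) ≤
      finrank ℂ (fixedMat (A * B)) :=
    Submodule.finrank_mono (fixedMat_inf_le A B)
  omega

lemma key_step (r n : ℕ) (hr : 0 < r) (M : Matrix (Fin n) (Fin n) ℂ)
    (hM : IsMonomialMat r n M) (hne : M ≠ 1) :
    ∃ t N, IsReflMat r n t ∧ IsMonomialMat r n N ∧ M = t * N ∧
      fixedMat M < fixedMat N := by
  obtain ⟨σ, c, hc, rfl⟩ := eq_monoMat hM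
  have hc0 : ∀ j, c j ≠ 0 := by
    intro j h
    have := hc j
    rw [h, zero_pow hr.ne'] at this
    exact zero_ne_one this
  by_cases hσ : ∀ j, σ j = j
  · -- diagonal case
    have hσ1 : σ = 1 := Equiv.ext hσ
    subst hσ1
    have hdiag : ∃ j, c j ≠ 1 := by
      by_contra h
      push_neg at h
      apply hne
      ext i m
      rw [monoMat_apply, Matrix.one_apply, Equiv.Perm.one_apply]
      by_cases him : i = m
      · rw [if_pos him, if_pos him, h m]
      · rw [if_neg him, if_neg him]
    obtain ⟨j, hj⟩ := hdiag
    refine ⟨monoMat 1 (fun m => if m = j then c j else 1),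
      monoMat 1 (fun m => if m = j then 1 else c m), ⟨?_, ?_, ?_⟩, ?_, ?_, ?_⟩
    · exact isMonomial_monoMat (fun m => by split_ifs with h; exacts [hc j, one_pow r])
    · intro h
      have := congrFun (congrFun h j) j
      rw [monoMat_apply, Matrix.one_apply_eq] at this
      simp at this
      exact hj this
    · have : fixedMat (monoMat (1 : Equiv.Perm (Fin n)) (fun m => if m = j then c j else 1)) =
          LinearMap.ker (LinearMap.proj j : (Fin n → ℂ) →ₗ[ℂ] ℂ) := by
        ext x
        rw [mem_fixedMat_monoMat, LinearMap.mem_ker, LinearMap.proj_apply]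
        constructor
        · intro h
          have := h j
          rw [if_pos rfl, Equiv.Perm.one_apply] at this
          have h2 : (c j - 1) * x j = 0 := by linear_combination this
          rcases mul_eq_zero.mp h2 with h3 | h3
          · exact absurd (by linear_combination h3) hj
          · exact h3
        · intro h m
          rw [Equiv.Perm.one_apply]
          by_cases hm : m = j
          · subst hm; rw [h, mul_zero]
          · rw [if_neg hm, one_mul]
      rw [this, finrank_ker_proj]
      intro h
      simpa using LinearMap.congr_fun h (Pi.single j 1)
    · exact isMonomial_monoMat (fun m => by split_ifs with h; exacts [one_pow r, hc m])
    · rw [monoMat_mul, one_mul]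
      ext i m
      rw [monoMat_apply, monoMat_apply]
      by_cases him : i = (1 : Equiv.Perm (Fin n)) m
      · rw [if_pos him, if_pos him]
        by_cases hm : m = j <;> simp [hm, Equiv.Perm.one_apply]
      · rw [if_neg him, if_neg him]
    · rw [SetLike.lt_iff_le_and_exists]
      constructor
      · intro x hx
        rw [mem_fixedMat_monoMat] at hx ⊢
        intro m
        by_cases hm : m = j
        · subst hm; simp
        · rw [if_neg hm]; exact hx m
      · refine ⟨Pi.single j 1, ?_, ?_⟩
        · rw [mem_fixedMat_monoMat]
          intro m
          rw [Equiv.Perm.one_apply]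
          by_cases hm : m = j
          · subst hm; simp
          · simp [Pi.single_apply, hm]
        · rw [mem_fixedMat_monoMat]
          intro h
          have := h j
          rw [Equiv.Perm.one_apply] at this
          simp at this
          exact hj this
  · -- swap case
    push_neg at hσ
    obtain ⟨j, hjk⟩ := hσ
    set k := σ j with hk
    have hkj : k ≠ j := hjk
    set e : Fin n → ℂ := fun m => if m = j then c j else if m = k then (c j)⁻¹ else 1 with he
    have hej : e j = c j := by simp [he]
    have hek : e k = (c j)⁻¹ := by simp [he, hkj]
    have heo : ∀ m, m ≠ j → m ≠ k → e m = 1 := fun m h1 h2 => by simp [he, h1, h2]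
    have hepow : ∀ m, e m ^ r = 1 := by
      intro m
      by_cases h1 : m = j
      · rw [h1, hej]; exact hc j
      · by_cases h2 : m = k
        · rw [h2, hek, inv_pow, hc j, inv_one]
        · rw [heo m h1 h2, one_pow]
    have hee : ∀ m, e (Equiv.swap j k m) * e m = 1 := by
      intro m
      by_cases h1 : m = j
      · rw [h1, Equiv.swap_apply_left, hek, hej]
        exact inv_mul_cancel₀ (hc0 j)
      · by_cases h2 : m = k
        · rw [h2, Equiv.swap_apply_right, hej, hek]
          exact mul_inv_cancel₀ (hc0 j)
        · rw [Equiv.swap_apply_of_ne_of_ne h1 h2, heo m h1 h2, one_mul]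
    set t := monoMat (Equiv.swap j k) e with ht
    have htt : t * t = 1 := by
      rw [ht, monoMat_mul, Equiv.swap_mul_self, ← monoMat_one]
      have : (fun m => e (Equiv.swap j k m) * e m) = fun _ => (1:ℂ) := funext hee
      rw [this]
    have hfixt : ∀ x ∈ fixedMat (monoMat σ c), x ∈ fixedMat t := by
      intro x hx
      rw [mem_fixedMat_monoMat] at hx
      rw [ht, mem_fixedMat_monoMat]
      intro m
      by_cases h1 : m = j
      · rw [h1, Equiv.swap_apply_left, hej]
        exact hx j
      · by_cases h2 : m = k
        · rw [h2, Equiv.swap_apply_right, hek]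
          show (c j)⁻¹ * x (σ j) = x j
          rw [← hx j, inv_mul_cancel_left₀ (hc0 j)]
        · rw [Equiv.swap_apply_of_ne_of_ne h1 h2, heo m h1 h2, one_mul]
    refine ⟨t, t * monoMat σ c, ⟨isMonomial_monoMat hepow, ?_, ?_⟩, ?_, ?_, ?_⟩
    · intro h
      have h2 := congrFun (congrFun h k) j
      rw [ht, monoMat_apply, Matrix.one_apply_ne hkj] at h2
      rw [if_pos (Equiv.swap_apply_left j k).symm, hej] at h2
      exact hc0 j h2
    · have hker : fixedMat t = LinearMap.ker
          ((LinearMap.proj k : (Fin n → ℂ) →ₗ[ℂ] ℂ) - c j • LinearMap.proj j) := by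
        ext x
        rw [ht, mem_fixedMat_monoMat, LinearMap.mem_ker]
        simp only [LinearMap.sub_apply, LinearMap.smul_apply, LinearMap.proj_apply,
          smul_eq_mul, sub_eq_zero]
        constructor
        · intro h
          have := h j
          rw [Equiv.swap_apply_left, hej] at this
          exact this.symm
        · intro h m
          by_cases h1 : m = j
          · rw [h1, Equiv.swap_apply_left, hej]
            exact h.symm
          · by_cases h2 : m = k
            · rw [h2, Equiv.swap_apply_right, hek, h, inv_mul_cancel_left₀ (hc0 j)]
            · rw [Equiv.swap_apply_of_ne_of_ne h1 h2, heo m h1 h2, one_mul]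
      rw [hker, finrank_ker_proj]
      intro h
      have h2 := LinearMap.congr_fun h (Pi.single k 1)
      simp only [LinearMap.sub_apply, LinearMap.smul_apply, LinearMap.proj_apply,
        LinearMap.zero_apply, smul_eq_mul] at h2
      rw [Pi.single_eq_same, Pi.single_eq_of_ne hkj.symm] at h2
      simp at h2
    · rw [ht, monoMat_mul]
      exact isMonomial_monoMat (fun m => by rw [mul_pow, hepow, hc, one_mul])
    · rw [← mul_assoc, htt, one_mul]
    · rw [SetLike.lt_iff_le_and_exists]
      constructor
      · intro x hx
        exact fixedMat_inf_le t (monoMat σ c) ⟨hfixt x hx, hx⟩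
      · refine ⟨Pi.single j 1, ?_, ?_⟩
        · rw [ht, monoMat_mul, mem_fixedMat_monoMat]
          intro m
          by_cases hm : m = j
          · rw [hm, Pi.single_eq_same, mul_one, Equiv.Perm.mul_apply, ← hk,
              Equiv.swap_apply_right, Pi.single_eq_same, hek]
            exact inv_mul_cancel₀ (hc0 j)
          · rw [Pi.single_eq_of_ne hm, mul_zero, Equiv.Perm.mul_apply]
            rw [Pi.single_eq_of_ne]
            intro hswap
            apply hm
            have hsk : σ m = k :=
              (Equiv.swap j k).injective (hswap.trans (Equiv.swap_apply_right j k).symm)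
            rw [hk] at hsk
            exact σ.injective hsk
        · rw [mem_fixedMat_monoMat]
          intro h
          have := h j
          rw [Pi.single_eq_same, mul_one, Pi.single_eq_of_ne (by rw [← hk]; exact hkj)] at this
          exact hc0 j this

lemma list_lower_bound (r n : ℕ) :
    ∀ w : List (Matrix (Fin n) (Fin n) ℂ), (∀ s ∈ w, IsReflMat r n s) →
    n ≤ finrank ℂ (fixedMat w.prod) + w.length := by
  intro w
  induction w with
  | nil =>
    intro _
    rw [List.prod_nil, fixedMat_one]
    have : finrank ℂ (⊤ : Submodule ℂ (Fin n → ℂ)) = n := by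
      rw [finrank_top, Module.finrank_fin_fun]
    omega
  | cons s w ih =>
    intro h
    have hs := (h s List.mem_cons_self).2.2
    have hw := ih (fun x hx => h x (List.mem_cons_of_mem s hx))
    have hmul := finrank_fixedMat_mul s w.prod
    rw [List.prod_cons, List.length_cons]
    omega

lemma exists_word (r n : ℕ) (hr : 0 < r) :
    ∀ (d : ℕ) (M : Matrix (Fin n) (Fin n) ℂ), IsMonomialMat r n M →
      n - finrank ℂ (fixedMat M) = d →
      ∃ w : List (Matrix (Fin n) (Fin n) ℂ), w.length = d ∧
        (∀ s ∈ w, IsReflMat r n s) ∧ w.prod = M := by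
  intro d
  induction d using Nat.strong_induction_on with
  | _ d ih =>
    intro M hM hd
    rcases eq_or_ne M 1 with rfl | hne
    · have hd0 : d = 0 := by
        rw [← hd, fixedMat_one, finrank_top, Module.finrank_fin_fun]
        omega
      exact ⟨[], by simp [hd0], by simp, List.prod_nil⟩
    · obtain ⟨t, N, htR, hN, hMeq, hlt⟩ := key_step r n hr M hM hne
      have hlt' : finrank ℂ (fixedMat M) < finrank ℂ (fixedMat N) :=
        Submodule.finrank_lt_finrank_of_lt hlt
      have hNle := finrank_fixedMat_le N
      have ht := htR.2.2
      have hpair := finrank_fixedMat_mul t N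
      rw [← hMeq] at hpair
      obtain ⟨w', hlen', hrefl', hprod'⟩ :=
        ih (n - finrank ℂ (fixedMat N)) (by omega) N hN rfl
      refine ⟨t :: w', ?_, ?_, ?_⟩
      · rw [List.length_cons, hlen']; omega
      · intro s hs
        rcases List.mem_cons.mp hs with rfl | hs'
        · exact htR
        · exact hrefl' s hs'
      · rw [List.prod_cons, hprod', ← hMeq]

/-- In the complex reflection group `G(r,1,n)`, reflection length coincides with the
codimension of the fixed subspace. -/
theorem reflLength_eq_codim_G_r_1_n
    (r n : ℕ) (hr : 0 < r) (M : Matrix (Fin n) (Fin n) ℂ) (hM : IsMonomialMat r n M) :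
    reflLengthMat r n M = n - finrank ℂ (fixedMat M) := by
  obtain ⟨w, hlen, hrefl, hprod⟩ := exists_word r n hr (n - finrank ℂ (fixedMat M)) M hM rfl
  refine le_antisymm (Nat.sInf_le ⟨w, hlen, hrefl, hprod⟩)
    (le_csInf ⟨_, w, hlen, hrefl, hprod⟩ ?_)
  rintro k ⟨v, rfl, hvrefl, rfl⟩
  have h1 := list_lower_bound r n v hvrefl
  omega
end
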